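/- For any matrices L ∈ ℝ^{m×r} and R ∈ ℝ^{n×r}, the nuclear norm of their product satisfies ‖L·R'‖_* ≤ (‖L‖_F² + ‖R‖_F²)/2. -/

import Mathlib

open Matrix

/-- The Frobenius norm of a real matrix. -/
noncomputable def frobNorm {m n : Type*} [Fintype m] [Fintype n] (X : Matrix m n ℝ) : ℝ :=
  Real.sqrt (∑ i, ∑ j, X i j ^ 2)

/-- The nuclear norm (sum of singular values) of a real matrix, as the trace of √(XᵀX). -/
noncomputable def nucNorm {m n : Type*} [Fintype m] [Fintype n] [DecidableEq n]
    (X : Matrix m n ℝ) : ℝ :=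
  ((Matrix.posSemidef_conjTranspose_mul_self X).isHermitian.eigenvectorUnitary.1 *
    diagonal ((RCLike.ofReal : ℝ → ℝ) ∘ Real.sqrt ∘ (Matrix.posSemidef_conjTranspose_mul_self X).isHermitian.eigenvalues) *
    (star (Matrix.posSemidef_conjTranspose_mul_self X).isHermitian.eigenvectorUnitary :
      Matrix n n ℝ)).trace

lemma trace_sqrt_eq {n : Type*} [Fintype n] [DecidableEq n] {A : Matrix n n ℝ}
    (hA : A.PosSemidef) :
    (hA.1.eigenvectorUnitary.1 * diagonal ((RCLike.ofReal : ℝ → ℝ) ∘ Real.sqrt ∘ hA.1.eigenvalues) *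
      (star hA.1.eigenvectorUnitary : Matrix n n ℝ)).trace = ∑ i, Real.sqrt (hA.1.eigenvalues i) := by
  rw [Matrix.trace_mul_cycle]
  rw [Unitary.coe_star_mul_self, Matrix.one_mul, Matrix.trace_diagonal]
  simp [RCLike.ofReal_real_eq_id]

lemma dot_sum_right {ι p : Type*} [Fintype ι] [Fintype p] (x : p → ℝ) (f : ι → p → ℝ) :
    x ⬝ᵥ (∑ i, f i) = ∑ i, x ⬝ᵥ f i := by
  simp only [dotProduct, Finset.sum_apply, Finset.mul_sum]
  exact Finset.sum_comm

lemma dot_sum_left {ι p : Type*} [Fintype ι] [Fintype p] (x : p → ℝ) (f : ι → p → ℝ) :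
    (∑ i, f i) ⬝ᵥ x = ∑ i, f i ⬝ᵥ x := by
  rw [dotProduct_comm, dot_sum_right]
  exact Finset.sum_congr rfl fun i _ => dotProduct_comm x (f i)

lemma dot_self_nonneg {p : Type*} [Fintype p] (x : p → ℝ) : 0 ≤ x ⬝ᵥ x :=
  Finset.sum_nonneg fun i _ => mul_self_nonneg _

lemma dot_le_half {p : Type*} [Fintype p] (a b : p → ℝ) :
    a ⬝ᵥ b ≤ (a ⬝ᵥ a + b ⬝ᵥ b) / 2 := by
  have h := dot_self_nonneg (a - b)
  rw [sub_dotProduct, dotProduct_sub, dotProduct_sub] at h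
  have hc : a ⬝ᵥ b = b ⬝ᵥ a := dotProduct_comm a b
  linarith

lemma bessel {ι p : Type*} [Fintype ι] [DecidableEq ι] [Fintype p] (u : ι → p → ℝ)
    (horth : ∀ i j, i ≠ j → u i ⬝ᵥ u j = 0) (hnorm : ∀ i, u i ⬝ᵥ u i ≤ 1) (x : p → ℝ) :
    ∑ i, (u i ⬝ᵥ x) ^ 2 ≤ x ⬝ᵥ x := by
  set c : ι → ℝ := fun i => u i ⬝ᵥ x with hc
  have h := dot_self_nonneg (x - ∑ i, c i • u i)
  rw [sub_dotProduct, dotProduct_sub, dotProduct_sub] at h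
  have h1 : x ⬝ᵥ (∑ i, c i • u i) = ∑ i, c i ^ 2 := by
    rw [dot_sum_right]
    refine Finset.sum_congr rfl fun i _ => ?_
    rw [dotProduct_smul, smul_eq_mul, dotProduct_comm, sq]
  have h2 : (∑ i, c i • u i) ⬝ᵥ x = ∑ i, c i ^ 2 := by
    rw [dot_sum_left]
    refine Finset.sum_congr rfl fun i _ => ?_
    rw [smul_dotProduct, smul_eq_mul, sq]
  have h3 : (∑ i, c i • u i) ⬝ᵥ (∑ j, c j • u j) ≤ ∑ i, c i ^ 2 := by
    rw [dot_sum_left]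
    calc ∑ i, (c i • u i) ⬝ᵥ (∑ j, c j • u j) = ∑ i, c i ^ 2 * (u i ⬝ᵥ u i) := by
          refine Finset.sum_congr rfl fun i _ => ?_
          rw [smul_dotProduct, dot_sum_right, smul_eq_mul, Finset.mul_sum]
          rw [Finset.sum_eq_single i]
          · rw [dotProduct_smul, smul_eq_mul]; ring
          · intro j _ hj
            rw [dotProduct_smul, horth i j (Ne.symm hj)]; simp
          · intro hi; exact absurd (Finset.mem_univ i) hi
      _ ≤ ∑ i, c i ^ 2 := by
          refine Finset.sum_le_sum fun i _ => ?_
          nlinarith [sq_nonneg (c i), hnorm i]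
  linarith

theorem nucNorm_mul_transpose_le' (m n r : ℕ)
    (L : Matrix (Fin m) (Fin r) ℝ) (R : Matrix (Fin n) (Fin r) ℝ) :
    nucNorm (L * Rᵀ)
      ≤ ((Real.sqrt (∑ i, ∑ j, L i j ^ 2)) ^ 2 + (Real.sqrt (∑ i, ∑ j, R i j ^ 2)) ^ 2) / 2 := by
  classical
  set X : Matrix (Fin m) (Fin n) ℝ := L * Rᵀ with hXdef
  have hH := Matrix.posSemidef_conjTranspose_mul_self X
  set lam : Fin n → ℝ := hH.1.eigenvalues with hlam
  have hlam0 : ∀ i, 0 ≤ lam i := fun i => hH.eigenvalues_nonneg i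
  set v : Fin n → Fin n → ℝ := fun i => ⇑(hH.1.eigenvectorBasis i) with hvdef
  have heig : ∀ i, (Xᴴ * X) *ᵥ v i = lam i • v i := fun i => hH.1.mulVec_eigenvectorBasis i
  have hv : ∀ i j, v i ⬝ᵥ v j = if i = j then 1 else 0 := by
    intro i j
    have h := orthonormal_iff_ite.mp hH.1.eigenvectorBasis.orthonormal i j
    simp only [PiLp.inner_apply, RCLike.inner_apply, conj_trivial] at h
    rw [dotProduct_comm]
    exact h
  have hXtX : Xᵀ * X = Xᴴ * X := by
    rw [Matrix.conjTranspose_eq_transpose_of_trivial]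
  have hXvv : ∀ i j, (X *ᵥ v i) ⬝ᵥ (X *ᵥ v j) = lam j * (if i = j then 1 else 0) := by
    intro i j
    rw [Matrix.dotProduct_mulVec, Matrix.vecMul_mulVec, ← Matrix.dotProduct_mulVec, hXtX,
      heig j, dotProduct_smul, smul_eq_mul, hv i j]
  set u : Fin n → Fin m → ℝ :=
    fun i => if lam i = 0 then 0 else (Real.sqrt (lam i))⁻¹ • (X *ᵥ v i) with hudef
  have hu_orth : ∀ i j, i ≠ j → u i ⬝ᵥ u j = 0 := by
    intro i j hij
    by_cases hi : lam i = 0 <;> by_cases hj : lam j = 0 <;>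
      simp [hudef, hi, hj, smul_dotProduct, dotProduct_smul, hXvv i j, hij]
  have hu_norm : ∀ i, u i ⬝ᵥ u i ≤ 1 := by
    intro i
    by_cases hi : lam i = 0
    · simp [hudef, hi]
    · have h := hXvv i i
      rw [if_pos rfl, mul_one] at h
      have hs : Real.sqrt (lam i) ≠ 0 :=
        Real.sqrt_ne_zero'.mpr ((hlam0 i).lt_of_ne (Ne.symm hi))
      simp only [hudef, if_neg hi, smul_dotProduct, dotProduct_smul,
        smul_eq_mul, h]
      rw [← Real.mul_self_sqrt (hlam0 i)]
      field_simp
      exact le_of_eq (by rw [Real.sqrt_sq (Real.sqrt_nonneg _)])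
  have hv_orth : ∀ i j, i ≠ j → v i ⬝ᵥ v j = 0 := fun i j hij => by rw [hv i j, if_neg hij]
  have hv_norm : ∀ i, v i ⬝ᵥ v i ≤ 1 := fun i => by rw [hv i i, if_pos rfl]
  have hσ : ∀ i, Real.sqrt (lam i) ≤
      ((Lᵀ *ᵥ u i) ⬝ᵥ (Lᵀ *ᵥ u i) + (Rᵀ *ᵥ v i) ⬝ᵥ (Rᵀ *ᵥ v i)) / 2 := by
    intro i
    by_cases hi : lam i = 0
    · rw [hi, Real.sqrt_zero]
      have h1 := dot_self_nonneg (Lᵀ *ᵥ u i)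
      have h2 := dot_self_nonneg (Rᵀ *ᵥ v i)
      linarith
    · have h1 : (Lᵀ *ᵥ u i) ⬝ᵥ (Rᵀ *ᵥ v i) = Real.sqrt (lam i) := by
        calc (Lᵀ *ᵥ u i) ⬝ᵥ (Rᵀ *ᵥ v i) = (u i ᵥ* L) ⬝ᵥ (Rᵀ *ᵥ v i) := by
              rw [Matrix.mulVec_transpose]
          _ = u i ⬝ᵥ (L *ᵥ (Rᵀ *ᵥ v i)) := (Matrix.dotProduct_mulVec _ _ _).symm
          _ = u i ⬝ᵥ (X *ᵥ v i) := by rw [Matrix.mulVec_mulVec]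
          _ = (Real.sqrt (lam i))⁻¹ * ((X *ᵥ v i) ⬝ᵥ (X *ᵥ v i)) := by
              rw [hudef]; simp [if_neg hi, smul_dotProduct]
          _ = (Real.sqrt (lam i))⁻¹ * lam i := by rw [hXvv i i]; simp
          _ = Real.sqrt (lam i) := by rw [inv_mul_eq_div, Real.div_sqrt]
      rw [← h1]
      exact dot_le_half _ _
  have hL : ∑ i, (Lᵀ *ᵥ u i) ⬝ᵥ (Lᵀ *ᵥ u i) ≤ (Real.sqrt (∑ i, ∑ j, L i j ^ 2)) ^ 2 := by
    rw [Real.sq_sqrt (by positivity)]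
    calc ∑ i, (Lᵀ *ᵥ u i) ⬝ᵥ (Lᵀ *ᵥ u i)
        = ∑ i, ∑ k, (u i ⬝ᵥ (fun j => L j k)) ^ 2 := by
          refine Finset.sum_congr rfl fun i _ => ?_
          simp only [dotProduct, Matrix.mulVec, Matrix.transpose_apply, sq]
          refine Finset.sum_congr rfl fun k _ => ?_
          congr 1 <;> exact Finset.sum_congr rfl fun j _ => mul_comm _ _
      _ = ∑ k, ∑ i, (u i ⬝ᵥ (fun j => L j k)) ^ 2 := Finset.sum_comm
      _ ≤ ∑ k, (fun j => L j k) ⬝ᵥ (fun j => L j k) :=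
          Finset.sum_le_sum fun k _ => bessel u hu_orth hu_norm _
      _ = ∑ i, ∑ j, L i j ^ 2 := by
          rw [Finset.sum_comm]
          exact Finset.sum_congr rfl fun i _ => Finset.sum_congr rfl fun k _ => (sq _).symm
  have hR : ∑ i, (Rᵀ *ᵥ v i) ⬝ᵥ (Rᵀ *ᵥ v i) ≤ (Real.sqrt (∑ i, ∑ j, R i j ^ 2)) ^ 2 := by
    rw [Real.sq_sqrt (by positivity)]
    calc ∑ i, (Rᵀ *ᵥ v i) ⬝ᵥ (Rᵀ *ᵥ v i)
        = ∑ i, ∑ k, (v i ⬝ᵥ (fun j => R j k)) ^ 2 := by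
          refine Finset.sum_congr rfl fun i _ => ?_
          simp only [dotProduct, Matrix.mulVec, Matrix.transpose_apply, sq]
          refine Finset.sum_congr rfl fun k _ => ?_
          congr 1 <;> exact Finset.sum_congr rfl fun j _ => mul_comm _ _
      _ = ∑ k, ∑ i, (v i ⬝ᵥ (fun j => R j k)) ^ 2 := Finset.sum_comm
      _ ≤ ∑ k, (fun j => R j k) ⬝ᵥ (fun j => R j k) :=
          Finset.sum_le_sum fun k _ => bessel v hv_orth hv_norm _
      _ = ∑ i, ∑ j, R i j ^ 2 := by
          rw [Finset.sum_comm]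
          exact Finset.sum_congr rfl fun i _ => Finset.sum_congr rfl fun k _ => (sq _).symm
  calc nucNorm X
      = ∑ i, Real.sqrt (lam i) := trace_sqrt_eq hH
    _ ≤ ∑ i, ((Lᵀ *ᵥ u i) ⬝ᵥ (Lᵀ *ᵥ u i) + (Rᵀ *ᵥ v i) ⬝ᵥ (Rᵀ *ᵥ v i)) / 2 :=
        Finset.sum_le_sum fun i _ => hσ i
    _ = ((∑ i, (Lᵀ *ᵥ u i) ⬝ᵥ (Lᵀ *ᵥ u i)) + ∑ i, (Rᵀ *ᵥ v i) ⬝ᵥ (Rᵀ *ᵥ v i)) / 2 := by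
        rw [← Finset.sum_div, Finset.sum_add_distrib]
    _ ≤ _ := by linarith


/-- For any factorization, ‖L Rᵀ‖₊ ≤ (‖L‖_F² + ‖R‖_F²)/2. -/
theorem nucNorm_mul_transpose_le (m n r : ℕ)
    (L : Matrix (Fin m) (Fin r) ℝ) (R : Matrix (Fin n) (Fin r) ℝ) :
    nucNorm (L * Rᵀ) ≤ (frobNorm L ^ 2 + frobNorm R ^ 2) / 2 :=
  nucNorm_mul_transpose_le' m n r L R
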